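/- Let 0 < δ < 1 with 1/δ ∈ ℕ, z ∈ ℤ², ρ ∈ Γ, and let 1 < p < ∞ with p' ∈ ℕ. Let w be a weight with [w]_{A^S_{p,ρ,z}} < ∞, where the side selection is the one produced by the face-selection algorithm (so that each ℓ_i meets at most A·δ^{−5/4} of the sets ℓ_1,…,ℓ_u for an absolute constant A). Then there is a constant C, independent of δ, w, f, ρ, z, such that ‖\tilde M_{ρ,δ} f‖_{L^p(Q_z,w)} ≤ C·δ^{−5/(4p)}·[w]_{A^S_{p,ρ,z}}^{1/p}·‖f‖_{L^p(7Q_z,w)} for all f. -/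

import Mathlib

open MeasureTheory Metric Set
open scoped ENNReal NNReal

noncomputable section

/-- Index of a `k`-face of an axis-parallel cube in `ℝⁿ`: a set of `k` "free" coordinates
together with a sign choice for the remaining coordinates (only the signs of coordinates
outside the free set matter). -/
abbrev FaceIdx (n k : ℕ) := {T : Finset (Fin n) // T.card = k} × (Fin n → Bool)

/-- The `k`-face of the axis-parallel cube centered at `x` with side length `2 r`
corresponding to the face index `F`. -/
def kFace {n : ℕ} (k : ℕ) (x : Fin n → ℝ) (r : ℝ) (F : FaceIdx n k) : Set (Fin n → ℝ) :=
  {y | (∀ i ∈ F.1.1, |y i - x i| ≤ r) ∧ ∀ i ∉ F.1.1, y i = x i + (if F.2 i then r else -r)}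

/-- The `δ`-neighborhood of a `k`-face. -/
def faceNbhd {n : ℕ} (k : ℕ) (δ : ℝ) (x : Fin n → ℝ) (r : ℝ) (F : FaceIdx n k) :
    Set (Fin n → ℝ) :=
  Metric.cthickening δ (kFace k x r F)

/-- The `δ`-neighborhood of the whole `k`-skeleton. -/
def skelNbhd {n : ℕ} (k : ℕ) (δ : ℝ) (x : Fin n → ℝ) (r : ℝ) : Set (Fin n → ℝ) :=
  ⋃ F : FaceIdx n k, faceNbhd k δ x r F

/-- The `k`-skeleton maximal function with width `δ` (with values in `ℝ≥0∞`):
`M^k_δ f (x) = sup_{1 ≤ r ≤ 2} min_j ⨍_{S^j_{k,δ}(x,r)} |f|`. -/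
def skelMax (n k : ℕ) (δ : ℝ) (f : (Fin n → ℝ) → ℝ) (x : Fin n → ℝ) : ℝ≥0∞ :=
  ⨆ r ∈ Set.Icc (1 : ℝ) 2, ⨅ F : FaceIdx n k,
    (volume (faceNbhd k δ x r F))⁻¹ * ∫⁻ y in faceNbhd k δ x r F, (‖f y‖₊ : ℝ≥0∞)

/-- `L^p` norm of an `ℝ≥0∞`-valued function. -/
def lpNormE {α : Type*} [MeasurableSpace α] (g : α → ℝ≥0∞) (p : ℝ) (μ : Measure α) : ℝ≥0∞ :=
  (∫⁻ x, g x ^ p ∂μ) ^ (1 / p)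

/-- The measure `w(x) dx` associated to a weight `w`. -/
def wMeasure {n : ℕ} (w : (Fin n → ℝ) → ℝ) : Measure (Fin n → ℝ) :=
  volume.withDensity fun x => ENNReal.ofReal (w x)

/-- Average of `g` over the set `A` (with respect to Lebesgue measure). -/
def ravg {n : ℕ} (A : Set (Fin n → ℝ)) (g : (Fin n → ℝ) → ℝ) : ℝ :=
  (volume A).toReal⁻¹ * ∫ y in A, g y

/-- The axis-parallel cube with center `c` and side length `s`. -/
def cube {n : ℕ} (c : Fin n → ℝ) (s : ℝ) : Set (Fin n → ℝ) :=
  {y | ∀ j, |y j - c j| ≤ s / 2}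

/-- The closed unit cube `Q_z` with lower-left vertex `z`. -/
def unitCube {n : ℕ} (z : Fin n → ℤ) : Set (Fin n → ℝ) :=
  {y | ∀ j, (z j : ℝ) ≤ y j ∧ y j ≤ (z j : ℝ) + 1}

/-- The cube `7 Q_z`: same center as `Q_z`, side length `7`. -/
def sevenCube {n : ℕ} (z : Fin n → ℤ) : Set (Fin n → ℝ) :=
  {y | ∀ j, |y j - ((z j : ℝ) + 1 / 2)| ≤ 7 / 2}

/-- The (half-open) grid cell `Q_z(m)` of side length `δ = 1/N` inside `Q_z`. -/
def gridCell {n : ℕ} (N : ℕ) (z : Fin n → ℤ) (m : Fin n → Fin N) : Set (Fin n → ℝ) :=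
  {y | ∀ j, (z j : ℝ) + (m j : ℝ) / N ≤ y j ∧ y j < (z j : ℝ) + ((m j : ℝ) + 1) / N}

/-- The center `x_m` of the grid cell `Q_z(m)`. -/
def gridCenter {n : ℕ} (N : ℕ) (z : Fin n → ℤ) (m : Fin n → Fin N) : Fin n → ℝ :=
  fun j => (z j : ℝ) + ((m j : ℝ) + 1 / 2) / N

/-- Membership in `Γ`: a radius function with values in `[1,2] ∩ δ ℤ`, `δ = 1/N`. -/
def inGamma {n : ℕ} (N : ℕ) (ρ : (Fin n → Fin N) → ℝ) : Prop :=
  ∀ m, ρ m ∈ Set.Icc (1 : ℝ) 2 ∧ ∃ t : ℤ, ρ m = (t : ℝ) / N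

/-- The `δ'`-neighborhood `ℓ_m` of the selected `k`-face of the skeleton
`S_k(x_m, ρ(x_m))`. -/
def selFace {n : ℕ} (k N : ℕ) (z : Fin n → ℤ) (ρ : (Fin n → Fin N) → ℝ)
    (sel : (Fin n → Fin N) → FaceIdx n k) (δ' : ℝ) (m : Fin n → Fin N) : Set (Fin n → ℝ) :=
  Metric.cthickening δ' (kFace k (gridCenter N z m) (ρ m) (sel m))

/-- The linearized `k`-skeleton maximal operator: on the cell `Q_z(m)` it equals the
average of `f` over the `δ'`-neighborhood of the selected face. -/
def linMax {n : ℕ} (k N : ℕ) (z : Fin n → ℤ) (ρ : (Fin n → Fin N) → ℝ)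
    (sel : (Fin n → Fin N) → FaceIdx n k) (δ' : ℝ) (f : (Fin n → ℝ) → ℝ)
    (x : Fin n → ℝ) : ℝ :=
  ∑ m : Fin n → Fin N, Set.indicator (gridCell N z m)
    (fun _ => (volume (selFace k N z ρ sel δ' m)).toReal⁻¹ *
      ∫ y in selFace k N z ρ sel δ' m, f y) x

/-- The local skeleton `A_p` constant `[w]_{A^{S_k}_{p,ρ,z}}` (for `1 < p < ∞`). -/
def ApLoc {n : ℕ} (k N : ℕ) (z : Fin n → ℤ) (ρ : (Fin n → Fin N) → ℝ)
    (sel : (Fin n → Fin N) → FaceIdx n k) (w : (Fin n → ℝ) → ℝ) (p : ℝ) : ℝ≥0∞ :=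
  ⨆ m : Fin n → Fin N,
    ((volume (selFace k N z ρ sel ((N : ℝ)⁻¹) m))⁻¹ *
        ∫⁻ y in gridCell N z m, ENNReal.ofReal (w y)) *
      ((volume (selFace k N z ρ sel ((N : ℝ)⁻¹) m))⁻¹ *
        ∫⁻ y in selFace k N z ρ sel ((N : ℝ)⁻¹) m,
          ENNReal.ofReal (w y) ^ (1 - p / (p - 1))) ^ (p - 1)

/-- The local skeleton `A_1` constant `[w]_{A^{S_k}_{1,ρ,z}}`. -/
def A1Loc {n : ℕ} (k N : ℕ) (z : Fin n → ℤ) (ρ : (Fin n → Fin N) → ℝ)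
    (sel : (Fin n → Fin N) → FaceIdx n k) (w : (Fin n → ℝ) → ℝ) : ℝ≥0∞ :=
  ⨆ m : Fin n → Fin N,
    ((volume (selFace k N z ρ sel ((N : ℝ)⁻¹) m))⁻¹ *
        ∫⁻ y in gridCell N z m, ENNReal.ofReal (w y)) *
      essSup (fun y => (ENNReal.ofReal (w y))⁻¹)
        (volume.restrict (selFace k N z ρ sel ((N : ℝ)⁻¹) m))

/-- The global skeleton `A_p` constant `[w]_{A^{S_k}_p}` (with the `A_1` version at `p = 1`). -/
def ApGlobal {n : ℕ} (k N : ℕ)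
    (sel : (Fin n → ℤ) → ((Fin n → Fin N) → ℝ) → (Fin n → Fin N) → FaceIdx n k)
    (w : (Fin n → ℝ) → ℝ) (p : ℝ) : ℝ≥0∞ :=
  if p = 1 then
    ⨆ z : Fin n → ℤ, ⨆ ρ : {ρ : (Fin n → Fin N) → ℝ // inGamma N ρ},
      A1Loc k N z ρ.1 (sel z ρ.1) w
  else
    ⨆ z : Fin n → ℤ, ⨆ ρ : {ρ : (Fin n → Fin N) → ℝ // inGamma N ρ},
      ApLoc k N z ρ.1 (sel z ρ.1) w p


/-! ### Auxiliary lemmas -/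

lemma kFace_nonempty {n k : ℕ} (x : Fin n → ℝ) {r : ℝ} (hr : 0 ≤ r) (F : FaceIdx n k) :
    (kFace k x r F).Nonempty := by
  refine ⟨fun i => x i + (if F.2 i then r else -r), fun i _ => ?_, fun i _ => rfl⟩
  rw [add_sub_cancel_left]
  split <;> simp [abs_of_nonneg hr, abs_of_nonpos (neg_nonpos.mpr hr), hr]

lemma kFace_subset_closedBall {n k : ℕ} (x : Fin n → ℝ) {r : ℝ} (hr : 0 ≤ r) (F : FaceIdx n k) :
    kFace k x r F ⊆ Metric.closedBall x r := by
  intro y hy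
  rw [Metric.mem_closedBall, dist_pi_le_iff hr]
  intro i
  rw [Real.dist_eq]
  by_cases hi : i ∈ F.1.1
  · exact hy.1 i hi
  · rw [hy.2 i hi, add_sub_cancel_left]
    split <;> simp [abs_of_nonneg hr, abs_of_nonpos (neg_nonpos.mpr hr), hr]

lemma cthickening_cb_subset {E : Type*} [PseudoMetricSpace E] {x : E} {r δ : ℝ} (hδ : 0 ≤ δ) :
    Metric.cthickening δ (Metric.closedBall x r) ⊆ Metric.closedBall x (r + δ) := by
  intro y hy
  rw [Metric.mem_closedBall]
  refine le_of_forall_pos_le_add fun ε hε => ?_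
  rw [Metric.mem_cthickening_iff] at hy
  have h2 : EMetric.infEdist y (Metric.closedBall x r) < ENNReal.ofReal (δ + ε) :=
    lt_of_le_of_lt hy (by rw [ENNReal.ofReal_lt_ofReal_iff (by linarith)]; linarith)
  obtain ⟨q, hq, hlt⟩ := EMetric.infEdist_lt_iff.mp h2
  rw [edist_lt_ofReal] at hlt
  have hqx : dist q x ≤ r := Metric.mem_closedBall.mp hq
  calc dist y x ≤ dist y q + dist q x := dist_triangle _ _ _
    _ ≤ r + δ + ε := by linarith

lemma sevenCube_eq {n : ℕ} (z : Fin n → ℤ) :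
    sevenCube z = Metric.closedBall (fun j => (z j : ℝ) + 1 / 2) ((7:ℝ) / 2) := by
  ext y
  rw [Metric.mem_closedBall, dist_pi_le_iff (by norm_num : (0:ℝ) ≤ 7/2)]
  simp only [sevenCube, Set.mem_setOf_eq, Real.dist_eq]

lemma gridCenter_dist {n N : ℕ} (hN : 0 < N) (z : Fin n → ℤ) (m : Fin n → Fin N) :
    dist (gridCenter N z m) (fun j => (z j : ℝ) + 1 / 2) ≤ 1 / 2 := by
  rw [dist_pi_le_iff (by norm_num : (0:ℝ) ≤ 1/2)]
  intro j
  have hN' : (0:ℝ) < N := by exact_mod_cast hN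
  have h1 : (0:ℝ) ≤ ((m j : ℝ) + 1/2) / N := by positivity
  have h2 : ((m j : ℝ) + 1/2) / N ≤ 1 := by
    rw [div_le_one hN']
    have : (m j : ℝ) + 1 ≤ N := by exact_mod_cast (m j).isLt
    linarith
  rw [Real.dist_eq, gridCenter]
  rw [abs_le]
  constructor <;> [skip; skip] <;> nlinarith

lemma selFace_subset_sevenCube {n k N : ℕ} (hN : 0 < N) {δ' : ℝ} (hδ0 : 0 ≤ δ') (hδ1 : δ' ≤ 1)
    (z : Fin n → ℤ) {ρ : (Fin n → Fin N) → ℝ} (hρ : inGamma N ρ)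
    (sel : (Fin n → Fin N) → FaceIdx n k) (m : Fin n → Fin N) :
    selFace k N z ρ sel δ' m ⊆ sevenCube z := by
  have hr0 : (0:ℝ) ≤ ρ m := le_trans zero_le_one (hρ m).1.1
  have h1 : selFace k N z ρ sel δ' m ⊆
      Metric.cthickening δ' (Metric.closedBall (gridCenter N z m) (ρ m)) :=
    Metric.cthickening_subset_of_subset _ (kFace_subset_closedBall _ hr0 _)
  refine h1.trans ((cthickening_cb_subset hδ0).trans ?_)
  rw [sevenCube_eq]
  refine Metric.closedBall_subset_closedBall' ?_
  have := gridCenter_dist hN z m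
  have hr2 : ρ m ≤ 2 := (hρ m).1.2
  linarith

lemma volume_selFace_pos {n k N : ℕ} {δ' : ℝ} (hδ0 : 0 < δ') (z : Fin n → ℤ)
    {ρ : (Fin n → Fin N) → ℝ} (hρ : inGamma N ρ)
    (sel : (Fin n → Fin N) → FaceIdx n k) (m : Fin n → Fin N) :
    0 < volume (selFace k N z ρ sel δ' m) := by
  obtain ⟨q, hq⟩ := kFace_nonempty (gridCenter N z m)
    (le_trans zero_le_one (hρ m).1.1) (sel m)
  calc (0:ℝ≥0∞) < volume (Metric.ball q δ') := measure_ball_pos _ _ hδ0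
    _ ≤ volume (selFace k N z ρ sel δ' m) := by
        refine measure_mono (Metric.ball_subset_closedBall.trans ?_)
        exact Metric.closedBall_subset_cthickening hq δ'

lemma volume_selFace_ne_top {n k N : ℕ} (hN : 0 < N) {δ' : ℝ} (hδ0 : 0 ≤ δ') (hδ1 : δ' ≤ 1)
    (z : Fin n → ℤ) {ρ : (Fin n → Fin N) → ℝ} (hρ : inGamma N ρ)
    (sel : (Fin n → Fin N) → FaceIdx n k) (m : Fin n → Fin N) :
    volume (selFace k N z ρ sel δ' m) ≠ ⊤ := by
  refine ne_top_of_le_ne_top ?_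
    (measure_mono (selFace_subset_sevenCube hN hδ0 hδ1 z hρ sel m))
  rw [sevenCube_eq]
  exact (isCompact_closedBall _ _).measure_lt_top.ne

lemma measurableSet_gridCell {n N : ℕ} (z : Fin n → ℤ) (m : Fin n → Fin N) :
    MeasurableSet (gridCell N z m) := by
  have h : gridCell N z m =
      Set.univ.pi fun j => Set.Ico ((z j : ℝ) + (m j : ℝ) / N) ((z j : ℝ) + ((m j : ℝ) + 1) / N) := by
    ext y; simp [gridCell, Set.mem_pi, Set.mem_Ico]
  rw [h]
  exact MeasurableSet.univ_pi fun j => measurableSet_Ico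

lemma measurableSet_unitCube {n : ℕ} (z : Fin n → ℤ) : MeasurableSet (unitCube z) := by
  have h : unitCube z = Set.univ.pi fun j => Set.Icc ((z j : ℝ)) ((z j : ℝ) + 1) := by
    ext y; simp [unitCube, Set.mem_pi, Set.mem_Icc, Pi.le_def, forall_and]
  rw [h]
  exact MeasurableSet.univ_pi fun j => measurableSet_Icc

lemma gridCell_eq_of_mem {n N : ℕ} (hN : 0 < N) {z : Fin n → ℤ} {m m' : Fin n → Fin N}
    {x : Fin n → ℝ} (hx : x ∈ gridCell N z m) (hx' : x ∈ gridCell N z m') : m = m' := by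
  have hN' : (0:ℝ) < N := by exact_mod_cast hN
  have key : ∀ (a b : Fin n → Fin N), x ∈ gridCell N z a → x ∈ gridCell N z b →
      ∀ j, (a j : ℕ) ≤ (b j : ℕ) := by
    intro a b ha hb j
    have h1 := (ha j).1
    have h2 := (hb j).2
    have h3 : (a j : ℝ) / N < ((b j : ℝ) + 1) / N := by linarith
    have h4 : (a j : ℝ) < (b j : ℝ) + 1 := (div_lt_div_iff_of_pos_right hN').mp h3
    have h5 : ((a j : ℕ) : ℝ) < ((b j : ℕ) : ℝ) + 1 := by exact_mod_cast h4
    have h6 : (a j : ℕ) < (b j : ℕ) + 1 := by exact_mod_cast h5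
    omega
  funext j
  exact Fin.ext (le_antisymm (key m m' hx hx' j) (key m' m hx' hx j))

lemma linMax_apply_of_mem {n k N : ℕ} (hN : 0 < N) {z : Fin n → ℤ} {ρ : (Fin n → Fin N) → ℝ}
    {sel : (Fin n → Fin N) → FaceIdx n k} {δ' : ℝ} {f : (Fin n → ℝ) → ℝ}
    {m : Fin n → Fin N} {x : Fin n → ℝ} (hx : x ∈ gridCell N z m) :
    linMax k N z ρ sel δ' f x = (volume (selFace k N z ρ sel δ' m)).toReal⁻¹ *
      ∫ y in selFace k N z ρ sel δ' m, f y := by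
  rw [linMax, Finset.sum_eq_single m]
  · exact Set.indicator_of_mem hx _
  · intro b _ hb
    exact Set.indicator_of_notMem (fun hxb => hb (gridCell_eq_of_mem hN hxb hx)) _
  · intro h; exact absurd (Finset.mem_univ m) h

lemma linMax_apply_of_not_mem {n k N : ℕ} {z : Fin n → ℤ} {ρ : (Fin n → Fin N) → ℝ}
    {sel : (Fin n → Fin N) → FaceIdx n k} {δ' : ℝ} {f : (Fin n → ℝ) → ℝ}
    {x : Fin n → ℝ} (hx : ∀ m, x ∉ gridCell N z m) :
    linMax k N z ρ sel δ' f x = 0 :=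
  Finset.sum_eq_zero fun m _ => Set.indicator_of_notMem (hx m) _

open Classical in
lemma sum_restrict_le {α : Type*} [MeasurableSpace α] (μ : Measure α) {ι : Type*} [Fintype ι]
    {t : ι → Set α} (ht : ∀ i, MeasurableSet (t i)) {B : Set α}
    (hB : MeasurableSet B) (htB : ∀ i, t i ⊆ B) {K : ℝ≥0∞}
    (hover : ∀ y, (((Finset.univ.filter (fun i => y ∈ t i)).card : ℝ≥0∞)) ≤ K) :
    (∑ i, μ.restrict (t i)) ≤ K • μ.restrict B := by
  rw [Measure.le_iff]
  intro s hs
  have lhs_eq : (∑ i, μ.restrict (t i)) s = ∑ i, μ (s ∩ t i) := by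
    rw [Measure.finset_sum_apply]
    exact Finset.sum_congr rfl fun i _ => Measure.restrict_apply hs
  rw [lhs_eq, Measure.smul_apply, Measure.restrict_apply hs, smul_eq_mul]
  have step1 : ∑ i, μ (s ∩ t i) = ∫⁻ y, ∑ i, (s ∩ t i).indicator (1 : α → ℝ≥0∞) y ∂μ := by
    rw [lintegral_finset_sum]
    · exact Finset.sum_congr rfl fun i _ =>
        (lintegral_indicator_one (hs.inter (ht i))).symm
    · exact fun i _ => measurable_const.indicator (hs.inter (ht i))
  rw [step1]
  have step2 : ∀ y, ∑ i, (s ∩ t i).indicator (1 : α → ℝ≥0∞) y ≤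
      K * (s ∩ B).indicator (1 : α → ℝ≥0∞) y := by
    intro y
    have hsum : ∑ i, (s ∩ t i).indicator (1 : α → ℝ≥0∞) y =
        ((Finset.univ.filter (fun i => y ∈ s ∩ t i)).card : ℝ≥0∞) := by
      simp [Set.indicator_apply, Finset.sum_boole]
    rw [hsum]
    by_cases hy : ∃ i, y ∈ s ∩ t i
    · obtain ⟨i0, hi0⟩ := hy
      have hyB : y ∈ s ∩ B := ⟨hi0.1, htB i0 hi0.2⟩
      rw [Set.indicator_of_mem hyB, Pi.one_apply, mul_one]
      refine le_trans ?_ (hover y)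
      have hsub : Finset.univ.filter (fun i => y ∈ s ∩ t i) ⊆
          Finset.univ.filter (fun i => y ∈ t i) := by
        intro i hi
        simp only [Finset.mem_filter, Finset.mem_univ, true_and] at hi ⊢
        exact hi.2
      exact_mod_cast Nat.cast_le.mpr (Finset.card_le_card hsub)
    · have hemp : Finset.univ.filter (fun i => y ∈ s ∩ t i) = ∅ := by
        refine Finset.filter_eq_empty_iff.mpr fun i _ => fun h => hy ⟨i, h⟩
      rw [hemp]
      simp
  calc ∫⁻ y, ∑ i, (s ∩ t i).indicator (1 : α → ℝ≥0∞) y ∂μ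
      ≤ ∫⁻ y, K * (s ∩ B).indicator (1 : α → ℝ≥0∞) y ∂μ := lintegral_mono step2
    _ = K * μ (s ∩ B) := by
        have hptw : ∀ y, K * (s ∩ B).indicator (1 : α → ℝ≥0∞) y =
            (s ∩ B).indicator (fun _ => K) y := by
          intro y; by_cases h : y ∈ s ∩ B <;> simp [h]
        simp_rw [hptw]
        rw [lintegral_indicator (hs.inter hB), setLIntegral_const]

lemma holder_cell {α : Type*} [MeasurableSpace α] {μ : Measure α}
    {p q : ℝ} (hpq : p.HolderConjugate q)
    {W : α → ℝ≥0∞} (hW : AEMeasurable W μ) (hWt : ∀ y, W y ≠ ⊤)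
    {f : α → ℝ} (hf : AEMeasurable f μ)
    (hWpos : ∀ᵐ y ∂μ, W y ≠ 0) :
    (∫⁻ y, (‖f y‖₊ : ℝ≥0∞) ∂μ) ≤
      (∫⁻ y, (‖f y‖₊ : ℝ≥0∞) ^ p * W y ∂μ) ^ (1/p) *
      (∫⁻ y, W y ^ (1 - q) ∂μ) ^ (1/q) := by
  set a : α → ℝ≥0∞ := fun y => (‖f y‖₊ : ℝ≥0∞) * W y ^ (1/p) with ha_def
  set b : α → ℝ≥0∞ := fun y => W y ^ (-(1/p)) with hb_def
  have hp0 : p ≠ 0 := hpq.pos.ne'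
  have ha : AEMeasurable a μ := hf.aestronglyMeasurable.enorm.mul
    (hW.pow aemeasurable_const)
  have hb : AEMeasurable b μ := hW.pow aemeasurable_const
  have key : ∀ᵐ y ∂μ, (‖f y‖₊ : ℝ≥0∞) ≤ (a * b) y := by
    filter_upwards [hWpos] with y hy
    have h : a y * b y = (‖f y‖₊ : ℝ≥0∞) * (W y ^ ((1:ℝ)/p + -(1/p))) := by
      rw [ENNReal.rpow_add _ _ hy (hWt y), ha_def, hb_def, mul_assoc]
    simp only [Pi.mul_apply]
    rw [h]
    simp
  calc (∫⁻ y, (‖f y‖₊ : ℝ≥0∞) ∂μ) ≤ ∫⁻ y, (a * b) y ∂μ := lintegral_mono_ae key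
    _ ≤ (∫⁻ y, a y ^ p ∂μ) ^ (1/p) * (∫⁻ y, b y ^ q ∂μ) ^ (1/q) :=
        ENNReal.lintegral_mul_le_Lp_mul_Lq μ hpq ha hb
    _ = (∫⁻ y, (‖f y‖₊ : ℝ≥0∞) ^ p * W y ∂μ) ^ (1/p) *
      (∫⁻ y, W y ^ (1 - q) ∂μ) ^ (1/q) := by
        congr 1
        · congr 1
          refine lintegral_congr fun y => ?_
          rw [ha_def]
          simp only []
          rw [ENNReal.mul_rpow_of_nonneg _ _ hpq.nonneg, ← ENNReal.rpow_mul,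
            one_div_mul_cancel hp0, ENNReal.rpow_one]
        · congr 1
          refine lintegral_congr fun y => ?_
          rw [hb_def]
          simp only []
          rw [← ENNReal.rpow_mul]
          congr 1
          have hq0 : q ≠ 0 := hpq.symm.pos.ne'
          have h := hpq.inv_add_inv_eq_one
          have hp' : (1:ℝ)/p = 1 - 1/q := by
            rw [one_div, one_div]; linarith
          rw [neg_mul, hp']
          have h2 : (1 - 1/q) * q = q - 1 := by field_simp
          rw [h2]
          ring


lemma cell_estimate {α : Type*} [MeasurableSpace α] {μ : Measure α} {S : Set α}
    {p q : ℝ} (hpq : p.HolderConjugate q)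
    {w : α → ℝ} {f : α → ℝ}
    (hW : AEMeasurable (fun y => ENNReal.ofReal (w y)) (μ.restrict S))
    (hf : AEMeasurable f (μ.restrict S))
    (hV0 : μ S ≠ 0) (hVt : μ S ≠ ⊤)
    (hJt : (∫⁻ y in S, ENNReal.ofReal (w y) ^ (1 - q) ∂μ) ≠ ⊤)
    (cellW : ℝ≥0∞) :
    ENNReal.ofReal |(μ S).toReal⁻¹ * ∫ y in S, f y ∂μ| ^ p * cellW ≤
      (((μ S)⁻¹ * cellW) *
        ((μ S)⁻¹ * ∫⁻ y in S, ENNReal.ofReal (w y) ^ (1 - q) ∂μ) ^ (p - 1)) *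
      ∫⁻ y in S, (‖f y‖₊ : ℝ≥0∞) ^ p * ENNReal.ofReal (w y) ∂μ := by
  have hp1 : 1 < p := hpq.lt
  have hp0 : (0:ℝ) < p := hpq.pos
  have hpne : p ≠ 0 := hp0.ne'
  have hq1 : 1 < q := hpq.symm.lt
  have hVinv0 : (μ S)⁻¹ ≠ 0 := ENNReal.inv_ne_zero.mpr hVt
  have hVinvt : (μ S)⁻¹ ≠ ⊤ := ENNReal.inv_ne_top.mpr hV0
  have hWpos : ∀ᵐ y ∂(μ.restrict S), ENNReal.ofReal (w y) ≠ 0 := by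
    have hmeas : AEMeasurable (fun y => ENNReal.ofReal (w y) ^ (1 - q)) (μ.restrict S) :=
      hW.pow aemeasurable_const
    filter_upwards [ae_lt_top' hmeas hJt] with y hy h0
    rw [h0, ENNReal.zero_rpow_of_neg (by linarith)] at hy
    exact absurd hy (lt_irrefl ⊤)
  have holder := holder_cell hpq hW (fun y => ENNReal.ofReal_ne_top) hf hWpos
  have hc_le : ENNReal.ofReal |(μ S).toReal⁻¹ * ∫ y in S, f y ∂μ| ≤
      (μ S)⁻¹ * ∫⁻ y in S, (‖f y‖₊ : ℝ≥0∞) ∂μ := by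
    rw [← Real.enorm_eq_ofReal_abs, enorm_eq_nnnorm, nnnorm_mul, ENNReal.coe_mul]
    have h1 : (‖((μ S).toReal)⁻¹‖₊ : ℝ≥0∞) = (μ S)⁻¹ := by
      rw [← enorm_eq_nnnorm, Real.enorm_eq_ofReal_abs, abs_of_nonneg (by positivity),
        ENNReal.ofReal_inv_of_pos (ENNReal.toReal_pos hV0 hVt),
        ENNReal.ofReal_toReal hVt]
    rw [h1]
    exact mul_le_mul_right (enorm_integral_le_lintegral_enorm _) _
  calc ENNReal.ofReal |(μ S).toReal⁻¹ * ∫ y in S, f y ∂μ| ^ p * cellW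
      ≤ ((μ S)⁻¹ * ((∫⁻ y in S, (‖f y‖₊ : ℝ≥0∞) ^ p * ENNReal.ofReal (w y) ∂μ) ^ (1/p) *
          (∫⁻ y in S, ENNReal.ofReal (w y) ^ (1 - q) ∂μ) ^ (1/q))) ^ p * cellW :=
        mul_le_mul_left (ENNReal.rpow_le_rpow
          (le_trans hc_le (mul_le_mul_right holder _)) hp0.le) _
    _ = _ := by
        rw [ENNReal.mul_rpow_of_nonneg _ _ hp0.le, ENNReal.mul_rpow_of_nonneg _ _ hp0.le,
          ← ENNReal.rpow_mul, ← ENNReal.rpow_mul, one_div_mul_cancel hpne, ENNReal.rpow_one]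
        have hqp : (1/q) * p = p - 1 := by
          have hq_eq : q = p / (p - 1) := hpq.conjugate_eq
          rw [hq_eq, one_div_div]
          exact div_mul_cancel₀ _ hpne
        rw [hqp]
        have hVsplit : ((μ S)⁻¹) ^ p = (μ S)⁻¹ * ((μ S)⁻¹) ^ (p - 1) := by
          conv_lhs => rw [show p = 1 + (p - 1) by ring]
          rw [ENNReal.rpow_add _ _ hVinv0 hVinvt, ENNReal.rpow_one]
        rw [hVsplit, ENNReal.mul_rpow_of_nonneg _ _ (by linarith : (0:ℝ) ≤ p - 1)]
        ring

/-- local weighted bound for the linearized skeleton maximal operator: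
`‖M̃_{ρ,δ} f‖_{L^p(Q_z,w)} ≤ C δ^{-5/(4p)} [w]_{A^S_{p,ρ,z}}^{1/p} ‖f‖_{L^p(7Q_z,w)}`. -/
theorem sufficient_local (p : ℝ) (hp : 1 < p) (hp' : ∃ m : ℕ, p / (p - 1) = (m : ℝ))
    (A : ℝ) (hA : 0 < A) :
    ∃ C : ℝ, 0 < C ∧
      ∀ (N : ℕ), 1 < N → ∀ (δ : ℝ), δ = (N : ℝ)⁻¹ →
      ∀ (z : Fin 2 → ℤ) (ρ : (Fin 2 → Fin N) → ℝ), inGamma N ρ →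
      ∀ sel : (Fin 2 → Fin N) → FaceIdx 2 1,
      (∀ m, ({m' : Fin 2 → Fin N |
          (selFace 1 N z ρ sel δ m ∩ selFace 1 N z ρ sel δ m').Nonempty}.ncard : ℝ) ≤
        A * δ ^ (-(5 : ℝ) / 4)) →
      ∀ w : (Fin 2 → ℝ) → ℝ, (∀ x, 0 ≤ w x) → LocallyIntegrable w volume →
      ApLoc 1 N z ρ sel w p ≠ ⊤ →
      ∀ f : (Fin 2 → ℝ) → ℝ,
        eLpNorm (linMax 1 N z ρ sel δ f) (ENNReal.ofReal p)
            ((wMeasure w).restrict (unitCube z)) ≤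
          ENNReal.ofReal (C * δ ^ (-(5 : ℝ) / (4 * p))) * ApLoc 1 N z ρ sel w p ^ (1 / p) *
            eLpNorm f (ENNReal.ofReal p) ((wMeasure w).restrict (sevenCube z)) := by
  have hp0 : (0:ℝ) < p := lt_trans one_pos hp
  have hpne : p ≠ 0 := hp0.ne'
  have hpq : p.HolderConjugate (p / (p - 1)) := Real.HolderConjugate.conjExponent hp
  refine ⟨A ^ (1/p), Real.rpow_pos_of_pos hA _, ?_⟩
  intro N hN δ hδ z ρ hρ sel hsel w hw0 hwli hAp f
  subst hδ
  classical
  have hN0 : 0 < N := by omega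
  have hNR : (0:ℝ) < N := by exact_mod_cast hN0
  have h1N : (1:ℝ) ≤ N := by exact_mod_cast hN0
  have hδ0 : (0:ℝ) < (N:ℝ)⁻¹ := inv_pos.mpr hNR
  have hδ1 : ((N:ℝ))⁻¹ ≤ 1 := by
    rw [show (1:ℝ) = (1:ℝ)⁻¹ by norm_num]
    exact (inv_le_inv₀ hNR one_pos).mpr h1N
  have hWmeas : AEMeasurable (fun y => ENNReal.ofReal (w y)) (volume : Measure (Fin 2 → ℝ)) :=
    ENNReal.measurable_ofReal.comp_aemeasurable hwli.aestronglyMeasurable.aemeasurable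
  have hSmeas : ∀ m : Fin 2 → Fin N, MeasurableSet (selFace 1 N z ρ sel ((N:ℝ)⁻¹) m) :=
    fun m => Metric.isClosed_cthickening.measurableSet
  have hS7 : ∀ m, selFace 1 N z ρ sel ((N:ℝ)⁻¹) m ⊆ sevenCube z :=
    fun m => selFace_subset_sevenCube hN0 hδ0.le hδ1 z hρ sel m
  have hV0 : ∀ m, volume (selFace 1 N z ρ sel ((N:ℝ)⁻¹) m) ≠ 0 :=
    fun m => (volume_selFace_pos hδ0 z hρ sel m).ne'
  have hVt : ∀ m, volume (selFace 1 N z ρ sel ((N:ℝ)⁻¹) m) ≠ ⊤ :=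
    fun m => volume_selFace_ne_top hN0 hδ0.le hδ1 z hρ sel m
  have h7meas : MeasurableSet (sevenCube z) := by
    rw [sevenCube_eq]; exact measurableSet_closedBall
  set K : ℝ≥0∞ := ENNReal.ofReal (A * ((N:ℝ)⁻¹) ^ (-(5:ℝ)/4)) with hK_def
  -- each summand of the A_p constant is bounded by the A_p constant
  have hAPle : ∀ m : Fin 2 → Fin N,
      ((volume (selFace 1 N z ρ sel ((N : ℝ)⁻¹) m))⁻¹ *
          ∫⁻ y in gridCell N z m, ENNReal.ofReal (w y)) *
        ((volume (selFace 1 N z ρ sel ((N : ℝ)⁻¹) m))⁻¹ *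
          ∫⁻ y in selFace 1 N z ρ sel ((N : ℝ)⁻¹) m,
            ENNReal.ofReal (w y) ^ (1 - p / (p - 1))) ^ (p - 1) ≤
      ApLoc 1 N z ρ sel w p := by
    intro m
    unfold ApLoc
    exact le_iSup (fun m' : Fin 2 → Fin N =>
      ((volume (selFace 1 N z ρ sel ((N : ℝ)⁻¹) m'))⁻¹ *
          ∫⁻ y in gridCell N z m', ENNReal.ofReal (w y)) *
        ((volume (selFace 1 N z ρ sel ((N : ℝ)⁻¹) m'))⁻¹ *
          ∫⁻ y in selFace 1 N z ρ sel ((N : ℝ)⁻¹) m',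
            ENNReal.ofReal (w y) ^ (1 - p / (p - 1))) ^ (p - 1)) m
  -- the pointwise overlap bound
  have hKcount : ∀ y : Fin 2 → ℝ,
      ((Finset.univ.filter
          (fun m : Fin 2 → Fin N => y ∈ selFace 1 N z ρ sel ((N:ℝ)⁻¹) m)).card : ℝ≥0∞) ≤ K := by
    intro y
    by_cases hy : ∃ m0, y ∈ selFace 1 N z ρ sel ((N:ℝ)⁻¹) m0
    · obtain ⟨m0, hm0⟩ := hy
      have hfin : ({m' : Fin 2 → Fin N |
          (selFace 1 N z ρ sel ((N:ℝ)⁻¹) m0 ∩ selFace 1 N z ρ sel ((N:ℝ)⁻¹) m').Nonempty}).Finite :=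
        Set.toFinite _
      have hsub : Finset.univ.filter
            (fun m : Fin 2 → Fin N => y ∈ selFace 1 N z ρ sel ((N:ℝ)⁻¹) m) ⊆
          hfin.toFinset := by
        intro i hi
        simp only [Finset.mem_filter, Finset.mem_univ, true_and] at hi
        rw [Set.Finite.mem_toFinset]
        exact ⟨y, hm0, hi⟩
      have hcard : (((Finset.univ.filter
          (fun m : Fin 2 → Fin N => y ∈ selFace 1 N z ρ sel ((N:ℝ)⁻¹) m)).card : ℝ)) ≤
          A * ((N:ℝ)⁻¹) ^ (-(5:ℝ)/4) := by
        refine le_trans ?_ (hsel m0)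
        rw [Set.ncard_eq_toFinset_card _ hfin]
        exact_mod_cast Finset.card_le_card hsub
      rw [hK_def, ← ENNReal.ofReal_natCast]
      exact ENNReal.ofReal_le_ofReal hcard
    · have hemp : Finset.univ.filter
          (fun m : Fin 2 → Fin N => y ∈ selFace 1 N z ρ sel ((N:ℝ)⁻¹) m) = ∅ :=
        Finset.filter_eq_empty_iff.mpr fun i _ => fun h => hy ⟨i, h⟩
      rw [hemp]
      simp
  -- the key per-cell estimate
  have key : ∀ m : Fin 2 → Fin N,
      ENNReal.ofReal |(volume (selFace 1 N z ρ sel ((N:ℝ)⁻¹) m)).toReal⁻¹ *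
          ∫ y in selFace 1 N z ρ sel ((N:ℝ)⁻¹) m, f y| ^ p *
        (∫⁻ y in gridCell N z m, ENNReal.ofReal (w y)) ≤
      ApLoc 1 N z ρ sel w p *
        ∫⁻ y in selFace 1 N z ρ sel ((N:ℝ)⁻¹) m,
          (‖f y‖₊ : ℝ≥0∞) ^ p * ENNReal.ofReal (w y) := by
    intro m
    by_cases hcell : (∫⁻ y in gridCell N z m, ENNReal.ofReal (w y)) = 0
    · rw [hcell, mul_zero]; exact zero_le
    by_cases hint : Integrable f (volume.restrict (selFace 1 N z ρ sel ((N:ℝ)⁻¹) m))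
    case neg =>
      rw [integral_undef hint, mul_zero, abs_zero, ENNReal.ofReal_zero,
        ENNReal.zero_rpow_of_pos hp0, zero_mul]
      exact zero_le
    case pos =>
      have hVinv0 : (volume (selFace 1 N z ρ sel ((N:ℝ)⁻¹) m))⁻¹ ≠ 0 :=
        ENNReal.inv_ne_zero.mpr (hVt m)
      have hJt : (∫⁻ y in selFace 1 N z ρ sel ((N:ℝ)⁻¹) m,
          ENNReal.ofReal (w y) ^ (1 - p / (p - 1))) ≠ ⊤ := by
        intro hJ
        apply hAp
        refine top_le_iff.mp (le_trans (le_of_eq ?_) (hAPle m))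
        rw [hJ, ENNReal.mul_top hVinv0,
          ENNReal.top_rpow_of_pos (by linarith : (0:ℝ) < p - 1),
          ENNReal.mul_top (mul_ne_zero hVinv0 hcell)]
      refine le_trans (cell_estimate hpq hWmeas.restrict
        hint.aestronglyMeasurable.aemeasurable (hV0 m) (hVt m) hJt _) ?_
      exact mul_le_mul_left (hAPle m) _
  -- overlap estimate
  have overlap : ∑ m : Fin 2 → Fin N, ∫⁻ y in selFace 1 N z ρ sel ((N:ℝ)⁻¹) m,
        (‖f y‖₊ : ℝ≥0∞) ^ p * ENNReal.ofReal (w y) ≤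
      K * ∫⁻ y in sevenCube z, (‖f y‖₊ : ℝ≥0∞) ^ p * ENNReal.ofReal (w y) := by
    have hmle := sum_restrict_le (volume : Measure (Fin 2 → ℝ)) hSmeas h7meas hS7 hKcount
    calc ∑ m : Fin 2 → Fin N, ∫⁻ y in selFace 1 N z ρ sel ((N:ℝ)⁻¹) m,
          (‖f y‖₊ : ℝ≥0∞) ^ p * ENNReal.ofReal (w y)
        = ∫⁻ y, (‖f y‖₊ : ℝ≥0∞) ^ p * ENNReal.ofReal (w y)
            ∂(∑ m : Fin 2 → Fin N, volume.restrict (selFace 1 N z ρ sel ((N:ℝ)⁻¹) m)) :=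
          (lintegral_finset_sum_measure Finset.univ _ _).symm
      _ ≤ ∫⁻ y, (‖f y‖₊ : ℝ≥0∞) ^ p * ENNReal.ofReal (w y)
            ∂(K • volume.restrict (sevenCube z)) := lintegral_mono' hmle le_rfl
      _ = K * ∫⁻ y in sevenCube z, (‖f y‖₊ : ℝ≥0∞) ^ p * ENNReal.ofReal (w y) :=
          lintegral_smul_measure _ _
  -- rewrite the eLpNorms
  have hofp0 : (ENNReal.ofReal p) ≠ 0 := by
    rw [Ne, ENNReal.ofReal_eq_zero]
    linarith
  rw [eLpNorm_eq_lintegral_rpow_enorm_toReal hofp0 ENNReal.ofReal_ne_top,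
    eLpNorm_eq_lintegral_rpow_enorm_toReal hofp0 ENNReal.ofReal_ne_top,
    ENNReal.toReal_ofReal hp0.le]
  simp only [enorm_eq_nnnorm]
  -- convert the weighted integral of f
  have hI : (∫⁻ x, (‖f x‖₊ : ℝ≥0∞) ^ p ∂((wMeasure w).restrict (sevenCube z))) =
      ∫⁻ y in sevenCube z, (‖f y‖₊ : ℝ≥0∞) ^ p * ENNReal.ofReal (w y) := by
    have h := setLIntegral_withDensity_eq_setLIntegral_mul_non_measurable₀ (volume : Measure (Fin 2 → ℝ))
      (f := fun y => ENNReal.ofReal (w y)) (s := sevenCube z) hWmeas.restrict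
      (fun x => (‖f x‖₊ : ℝ≥0∞) ^ p) h7meas (ae_of_all _ fun y => ENNReal.ofReal_lt_top)
    calc (∫⁻ x, (‖f x‖₊ : ℝ≥0∞) ^ p ∂((wMeasure w).restrict (sevenCube z)))
        = ∫⁻ a in sevenCube z, ((fun y => ENNReal.ofReal (w y)) *
            fun x => (‖f x‖₊ : ℝ≥0∞) ^ p) a ∂volume := h
      _ = ∫⁻ y in sevenCube z, (‖f y‖₊ : ℝ≥0∞) ^ p * ENNReal.ofReal (w y) :=
          lintegral_congr fun y => by simp [mul_comm]
  rw [hI]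
  -- the main left-hand side bound
  have hUmeas : MeasurableSet (⋃ m ∈ (Finset.univ : Finset (Fin 2 → Fin N)), gridCell N z m) :=
    (Finset.univ : Finset (Fin 2 → Fin N)).measurableSet_biUnion
      fun m _ => measurableSet_gridCell z m
  have hdisj : Set.PairwiseDisjoint (↑(Finset.univ : Finset (Fin 2 → Fin N))) (gridCell N z) :=
    fun m _ m' _ hne => Set.disjoint_left.mpr fun x hx hx' => hne (gridCell_eq_of_mem hN0 hx hx')
  have hL : (∫⁻ x, (‖linMax 1 N z ρ sel ((N:ℝ)⁻¹) f x‖₊ : ℝ≥0∞) ^ p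
        ∂((wMeasure w).restrict (unitCube z))) ≤
      ApLoc 1 N z ρ sel w p *
        (K * ∫⁻ y in sevenCube z, (‖f y‖₊ : ℝ≥0∞) ^ p * ENNReal.ofReal (w y)) := by
    have h0 := setLIntegral_withDensity_eq_setLIntegral_mul_non_measurable₀ (volume : Measure (Fin 2 → ℝ))
      (f := fun y => ENNReal.ofReal (w y)) (s := unitCube z) hWmeas.restrict
      (fun x => (‖linMax 1 N z ρ sel ((N:ℝ)⁻¹) f x‖₊ : ℝ≥0∞) ^ p) (measurableSet_unitCube z)
      (ae_of_all _ fun y => ENNReal.ofReal_lt_top)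
    calc (∫⁻ x, (‖linMax 1 N z ρ sel ((N:ℝ)⁻¹) f x‖₊ : ℝ≥0∞) ^ p
          ∂((wMeasure w).restrict (unitCube z)))
        = ∫⁻ x in unitCube z, ((fun y => ENNReal.ofReal (w y)) *
            fun x => (‖linMax 1 N z ρ sel ((N:ℝ)⁻¹) f x‖₊ : ℝ≥0∞) ^ p) x ∂volume := h0
      _ = ∫⁻ x in unitCube z, ENNReal.ofReal (w x) *
            (‖linMax 1 N z ρ sel ((N:ℝ)⁻¹) f x‖₊ : ℝ≥0∞) ^ p ∂volume :=
          lintegral_congr fun x => by simp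
      _ ≤ ∫⁻ x, ENNReal.ofReal (w x) *
            (‖linMax 1 N z ρ sel ((N:ℝ)⁻¹) f x‖₊ : ℝ≥0∞) ^ p ∂volume :=
          setLIntegral_le_lintegral _ _
      _ = ∫⁻ x in ⋃ m ∈ (Finset.univ : Finset (Fin 2 → Fin N)), gridCell N z m,
            ENNReal.ofReal (w x) * (‖linMax 1 N z ρ sel ((N:ℝ)⁻¹) f x‖₊ : ℝ≥0∞) ^ p ∂volume := by
          rw [← lintegral_indicator hUmeas]
          refine lintegral_congr fun x => ?_
          by_cases hx : x ∈ ⋃ m ∈ (Finset.univ : Finset (Fin 2 → Fin N)), gridCell N z m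
          · rw [Set.indicator_of_mem hx]
          · rw [Set.indicator_of_notMem hx]
            have hx' : ∀ m, x ∉ gridCell N z m := by
              intro m hm
              exact hx (Set.mem_biUnion (Finset.mem_univ m) hm)
            rw [linMax_apply_of_not_mem hx']
            simp [ENNReal.zero_rpow_of_pos hp0]
      _ = ∑ m : Fin 2 → Fin N, ∫⁻ x in gridCell N z m,
            ENNReal.ofReal (w x) * (‖linMax 1 N z ρ sel ((N:ℝ)⁻¹) f x‖₊ : ℝ≥0∞) ^ p ∂volume :=
          lintegral_biUnion_finset hdisj (fun m _ => measurableSet_gridCell z m) _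
      _ = ∑ m : Fin 2 → Fin N,
            ENNReal.ofReal |(volume (selFace 1 N z ρ sel ((N:ℝ)⁻¹) m)).toReal⁻¹ *
              ∫ y in selFace 1 N z ρ sel ((N:ℝ)⁻¹) m, f y| ^ p *
            (∫⁻ y in gridCell N z m, ENNReal.ofReal (w y)) := by
          refine Finset.sum_congr rfl fun m _ => ?_
          rw [setLIntegral_congr_fun (measurableSet_gridCell z m)
            (fun x hx => by
              rw [linMax_apply_of_mem hN0 hx, ← enorm_eq_nnnorm, Real.enorm_eq_ofReal_abs, mul_comm])]
          exact lintegral_const_mul' _ _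
            (ENNReal.rpow_ne_top_of_nonneg hp0.le ENNReal.ofReal_ne_top)
      _ ≤ ∑ m : Fin 2 → Fin N, ApLoc 1 N z ρ sel w p *
            ∫⁻ y in selFace 1 N z ρ sel ((N:ℝ)⁻¹) m,
              (‖f y‖₊ : ℝ≥0∞) ^ p * ENNReal.ofReal (w y) :=
          Finset.sum_le_sum fun m _ => key m
      _ = ApLoc 1 N z ρ sel w p * ∑ m : Fin 2 → Fin N,
            ∫⁻ y in selFace 1 N z ρ sel ((N:ℝ)⁻¹) m,
              (‖f y‖₊ : ℝ≥0∞) ^ p * ENNReal.ofReal (w y) := by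
          rw [Finset.mul_sum]
      _ ≤ ApLoc 1 N z ρ sel w p *
            (K * ∫⁻ y in sevenCube z, (‖f y‖₊ : ℝ≥0∞) ^ p * ENNReal.ofReal (w y)) :=
          mul_le_mul_right overlap _
  -- conclude
  have hinvp : (0:ℝ) ≤ 1 / p := le_of_lt (by positivity)
  have hKpow : K ^ (1/p) = ENNReal.ofReal (A ^ (1/p) * ((N:ℝ)⁻¹) ^ (-(5:ℝ) / (4 * p))) := by
    have hxpos : 0 < A * ((N:ℝ)⁻¹) ^ (-(5:ℝ)/4) :=
      mul_pos hA (Real.rpow_pos_of_pos hδ0 _)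
    rw [hK_def, ENNReal.ofReal_rpow_of_pos hxpos]
    congr 1
    rw [Real.mul_rpow hA.le (Real.rpow_pos_of_pos hδ0 _).le, ← Real.rpow_mul hδ0.le]
    congr 1
    ring
  calc (∫⁻ x, (‖linMax 1 N z ρ sel ((N:ℝ)⁻¹) f x‖₊ : ℝ≥0∞) ^ p
        ∂((wMeasure w).restrict (unitCube z))) ^ (1/p)
      ≤ (ApLoc 1 N z ρ sel w p *
          (K * ∫⁻ y in sevenCube z, (‖f y‖₊ : ℝ≥0∞) ^ p * ENNReal.ofReal (w y))) ^ (1/p) :=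
        ENNReal.rpow_le_rpow hL hinvp
    _ = ApLoc 1 N z ρ sel w p ^ (1/p) * (K ^ (1/p) *
          (∫⁻ y in sevenCube z, (‖f y‖₊ : ℝ≥0∞) ^ p * ENNReal.ofReal (w y)) ^ (1/p)) := by
        rw [ENNReal.mul_rpow_of_nonneg _ _ hinvp, ENNReal.mul_rpow_of_nonneg _ _ hinvp]
    _ = ENNReal.ofReal (A ^ (1/p) * ((N:ℝ)⁻¹) ^ (-(5:ℝ) / (4 * p))) *
          ApLoc 1 N z ρ sel w p ^ (1/p) *
          (∫⁻ y in sevenCube z, (‖f y‖₊ : ℝ≥0∞) ^ p * ENNReal.ofReal (w y)) ^ (1/p) := by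
        rw [hKpow]; ring

end
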